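/- Let G be a group such that every element g ∈ G with g ≠ e generates an infinite cyclic subgroup which is contained in a unique maximal infinite cyclic subgroup, and suppose conjugation permutes maximal infinite cyclic subgroups. If infinitely many maximal infinite cyclic subgroups C_j (j ∈ ℕ) are pairwise non-conjugate but all the C_j are contained in conjugates of a single virtually cyclic subgroup V₀ (i.e., for each j there is g_j with g_j C_j g_j⁻¹ ≤ V₀), then V₀ contains infinitely many pairwise distinct maximal infinite cyclic subgroups — contradicting that a virtually cyclic group has only finitely many maximal infinite cyclic subgroups. Hence: if a group G that is hyperbolic-like in the sense of containing infinitely many conjugacy classes of maximal infinite cyclic subgroups has the unique-maximal-containment property, then G contains infinitely many conjugacy classes of maximal infinite virtually cyclic subgroups. -/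

import Mathlib

/-- An infinite cyclic subgroup. -/
def IsInfCyc {G : Type*} [Group G] (C : Subgroup G) : Prop :=
  (∃ g, C = Subgroup.zpowers g) ∧ (C : Set G).Infinite

/-- An infinite virtually cyclic subgroup. -/
def IsInfVirtCyc {G : Type*} [Group G] (V : Subgroup G) : Prop :=
  (V : Set G).Infinite ∧ ∃ c ∈ V, (Subgroup.zpowers c).relIndex V ≠ 0

/-- A maximal infinite cyclic subgroup of `G`. -/
def IsMaxInfCycSub {G : Type*} [Group G] (C : Subgroup G) : Prop :=
  IsInfCyc C ∧ ∀ D : Subgroup G, IsInfCyc D → C ≤ D → C = D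

/-- A maximal infinite virtually cyclic subgroup of `G`. -/
def IsMaxInfVC {G : Type*} [Group G] (M : Subgroup G) : Prop :=
  IsInfVirtCyc M ∧ ∀ V : Subgroup G, IsInfVirtCyc V → M ≤ V → M = V

/-- The conjugate subgroup `gCg⁻¹`. -/
def ConjSubgroup {G : Type*} [Group G] (g : G) (C : Subgroup G) : Subgroup G :=
  C.map (MulAut.conj g).toMonoidHom

section Aux

variable {G : Type*} [Group G]

lemma mem_conjSubgroup (g x : G) (C : Subgroup G) :
    x ∈ ConjSubgroup g C ↔ g⁻¹ * x * g ∈ C := by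
  simp only [ConjSubgroup, Subgroup.mem_map, MulEquiv.coe_toMonoidHom, MulAut.conj_apply]
  constructor
  · rintro ⟨y, hy, rfl⟩; simpa [mul_assoc] using hy
  · intro h; exact ⟨g⁻¹ * x * g, h, by group⟩

lemma conj_conj (g h : G) (C : Subgroup G) :
    ConjSubgroup g (ConjSubgroup h C) = ConjSubgroup (g * h) C := by
  ext x; simp [mem_conjSubgroup, mul_assoc]

lemma conj_one (C : Subgroup G) : ConjSubgroup 1 C = C := by
  ext x; simp [mem_conjSubgroup]

lemma conj_mono (g : G) {C D : Subgroup G} (h : C ≤ D) :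
    ConjSubgroup g C ≤ ConjSubgroup g D := Subgroup.map_mono h

lemma conj_infcyc (g : G) {C : Subgroup G} (h : IsInfCyc C) : IsInfCyc (ConjSubgroup g C) := by
  obtain ⟨⟨c, rfl⟩, hinf⟩ := h
  constructor
  · refine ⟨g * c * g⁻¹, ?_⟩
    show Subgroup.map _ _ = _
    rw [MonoidHom.map_zpowers]
    simp
  · have : (ConjSubgroup g (Subgroup.zpowers c) : Set G)
        = (MulAut.conj g) '' (Subgroup.zpowers c : Set G) := Subgroup.coe_map _ _
    rw [this]
    exact hinf.image ((MulAut.conj g).injective.injOn)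

lemma conj_maxinfcyc (g : G) {C : Subgroup G} (h : IsMaxInfCycSub C) :
    IsMaxInfCycSub (ConjSubgroup g C) := by
  refine ⟨conj_infcyc g h.1, fun D hD hle => ?_⟩
  have h2 : C ≤ ConjSubgroup g⁻¹ D := by
    have := conj_mono g⁻¹ hle
    rwa [conj_conj, inv_mul_cancel, conj_one] at this
  have h3 := h.2 _ (conj_infcyc g⁻¹ hD) h2
  rw [h3, conj_conj, mul_inv_cancel, conj_one]

end Aux

/-- if (1) every maximal infinite cyclic subgroup is contained in
a unique maximal infinite virtually cyclic subgroup, (2) every infinite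
virtually cyclic subgroup contains only finitely many maximal infinite cyclic
subgroups, and (3) there are infinitely many conjugacy classes of maximal
infinite cyclic subgroups, then there are infinitely many conjugacy classes of
maximal infinite virtually cyclic subgroups. -/
theorem stmt18 (G : Type*) [Group G]
    (h1 : ∀ C : Subgroup G, IsMaxInfCycSub C → ∃! M, IsMaxInfVC M ∧ C ≤ M)
    (h2 : ∀ V : Subgroup G, IsInfVirtCyc V →
      {C : Subgroup G | C ≤ V ∧ IsInfCyc C ∧
        ∀ D, D ≤ V → IsInfCyc D → C ≤ D → C = D}.Finite)
    (h3 : ∃ f : ℕ → Subgroup G, (∀ n, IsMaxInfCycSub (f n)) ∧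
      ∀ m n : ℕ, m ≠ n → ∀ g : G, ConjSubgroup g (f m) ≠ f n) :
    ∃ F : ℕ → Subgroup G, (∀ n, IsMaxInfVC (F n)) ∧
      ∀ m n : ℕ, m ≠ n → ∀ g : G, ConjSubgroup g (F m) ≠ F n := by
  classical
  obtain ⟨f, hf, hfne⟩ := h3
  choose M hM using fun n => (h1 (f n) (hf n)).exists
  let cls : ℕ → Set ℕ := fun x => {k | ∃ g : G, ConjSubgroup g (M x) = M k}
  -- each "conjugacy class of the M's" is finite
  have clsFin : ∀ x, (cls x).Finite := by
    intro x
    have hS : {C : Subgroup G | C ≤ M x ∧ IsInfCyc C ∧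
        ∀ D, D ≤ M x → IsInfCyc D → C ≤ D → C = D}.Finite := h2 (M x) (hM x).1.1
    let φ : ℕ → Subgroup G := fun k =>
      if h : ∃ g : G, ConjSubgroup g (M x) = M k then ConjSubgroup h.choose⁻¹ (f k) else ⊥
    have hval : ∀ k (hk : ∃ g : G, ConjSubgroup g (M x) = M k),
        φ k = ConjSubgroup hk.choose⁻¹ (f k) := fun k hk => dif_pos hk
    have hmax : ∀ k (hk : ∃ g : G, ConjSubgroup g (M x) = M k),
        IsMaxInfCycSub (φ k) ∧ φ k ≤ M x := by
      intro k hk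
      rw [hval k hk]
      refine ⟨conj_maxinfcyc _ (hf k), ?_⟩
      have h1k : f k ≤ ConjSubgroup hk.choose (M x) := by rw [hk.choose_spec]; exact (hM k).2
      have := conj_mono hk.choose⁻¹ h1k
      rwa [conj_conj, inv_mul_cancel, conj_one] at this
    have himg : φ '' cls x ⊆ {C : Subgroup G | C ≤ M x ∧ IsInfCyc C ∧
        ∀ D, D ≤ M x → IsInfCyc D → C ≤ D → C = D} := by
      rintro _ ⟨k, hk, rfl⟩
      obtain ⟨hmx, hle⟩ := hmax k hk
      exact ⟨hle, hmx.1, fun D _ hDc hCD => hmx.2 D hDc hCD⟩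
    have hinj : Set.InjOn φ (cls x) := by
      intro k hk j hj heq
      by_contra hne
      have hk' : ∃ g : G, ConjSubgroup g (M x) = M k := hk
      have hj' : ∃ g : G, ConjSubgroup g (M x) = M j := hj
      apply hfne k j hne (hj'.choose * hk'.choose⁻¹)
      rw [hval k hk', hval j hj'] at heq
      calc ConjSubgroup (hj'.choose * hk'.choose⁻¹) (f k)
          = ConjSubgroup hj'.choose (ConjSubgroup hk'.choose⁻¹ (f k)) := (conj_conj _ _ _).symm
        _ = ConjSubgroup hj'.choose (ConjSubgroup hj'.choose⁻¹ (f j)) := by rw [heq]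
        _ = f j := by rw [conj_conj, mul_inv_cancel, conj_one]
    exact Set.Finite.of_finite_image (hS.subset himg) hinj
  -- recursively choose indices avoiding previous classes
  let pick : {s : Set ℕ // s.Finite} → ℕ := fun s => (s.2.infinite_compl).nonempty.choose
  have pick_spec : ∀ s : {s : Set ℕ // s.Finite}, pick s ∉ s.1 :=
    fun s => (s.2.infinite_compl).nonempty.choose_spec
  let q : ℕ → {s : Set ℕ // s.Finite} := fun n =>
    Nat.rec ⟨∅, Set.finite_empty⟩ (fun _ s => ⟨s.1 ∪ cls (pick s), s.2.union (clsFin _)⟩) n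
  let a : ℕ → ℕ := fun n => pick (q n)
  have ha : ∀ n, a n ∉ (q n).1 := fun n => pick_spec (q n)
  have hstep : ∀ n, (q n).1 ∪ cls (a n) = (q (n + 1)).1 := fun n => rfl
  have hmono : ∀ m n, m ≤ n → (q m).1 ⊆ (q n).1 := by
    intro m n h
    induction n, h using Nat.le_induction with
    | base => exact subset_rfl
    | succ n hmn ih => exact ih.trans (by rw [← hstep n]; exact Set.subset_union_left)
  have hclssub : ∀ m n, m < n → cls (a m) ⊆ (q n).1 := by
    intro m n h
    refine Set.Subset.trans ?_ (hmono (m + 1) n h)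
    rw [← hstep m]; exact Set.subset_union_right
  refine ⟨fun n => M (a n), fun n => (hM (a n)).1, ?_⟩
  intro m n hmn g hcon
  change ConjSubgroup g (M (a m)) = M (a n) at hcon
  rcases lt_or_gt_of_ne hmn with h | h
  · exact ha n (hclssub m n h ⟨g, hcon⟩)
  · apply ha m
    apply hclssub n m h
    refine ⟨g⁻¹, ?_⟩
    rw [← hcon, conj_conj, inv_mul_cancel, conj_one]
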